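/- Let a : ℝ^d → ℝ^{d×d'} be bounded and Lipschitz with constant C, and let ΔX be an ℝ^{d'}-valued random variable independent of the pair (Y, Y') of ℝ^d-valued random variables, with |𝔼[ΔX]| ≤ C² h and 𝔼[|ΔX|²] ≤ C² h for some h > 0. Then the one-step Euler updates Z = Y + a(Y)ΔX and Z' = Y' + a(Y')ΔX satisfy 𝔼[|Z - Z'|²] ≤ (1 + C₁ h) 𝔼[|Y - Y'|²] for some constant C₁ depending only on C. -/

import Mathlib

open MeasureTheory ProbabilityTheory

/-- The inner product of two independent integrable Euclidean random vectors is
integrable. -/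
lemma aux_inner_integrable {Ω : Type} [MeasurableSpace Ω] {μ : Measure Ω}
    [IsProbabilityMeasure μ] {n : ℕ} {W X : Ω → EuclideanSpace ℝ (Fin n)}
    (hW : Integrable W μ) (hX : Integrable X μ) (hind : IndepFun W X μ) :
    Integrable (fun ω => (inner ℝ (W ω) (X ω) : ℝ)) μ := by
  have hcoord : ∀ i : Fin n, IndepFun (fun ω => W ω i) (fun ω => X ω i) μ := fun i =>
    hind.comp (EuclideanSpace.proj (𝕜 := ℝ) i).measurable (EuclideanSpace.proj (𝕜 := ℝ) i).measurable
  have hWi : ∀ i : Fin n, Integrable (fun ω => W ω i) μ := fun i =>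
    (EuclideanSpace.proj (𝕜 := ℝ) i).integrable_comp hW
  have hXi : ∀ i : Fin n, Integrable (fun ω => X ω i) μ := fun i =>
    (EuclideanSpace.proj (𝕜 := ℝ) i).integrable_comp hX
  simp_rw [PiLp.inner_apply, RCLike.inner_apply, conj_trivial]
  exact integrable_finset_sum _ fun i _ => ((hcoord i).integrable_mul (hWi i) (hXi i)).congr (ae_of_all _ fun ω => mul_comm _ _)

/-- Expectation of inner product of independent integrable Euclidean random vectors
factorizes. -/
lemma aux_inner_indep {Ω : Type} [MeasurableSpace Ω] {μ : Measure Ω}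
    [IsProbabilityMeasure μ] {n : ℕ} {W X : Ω → EuclideanSpace ℝ (Fin n)}
    (hW : Integrable W μ) (hX : Integrable X μ) (hind : IndepFun W X μ) :
    ∫ ω, (inner ℝ (W ω) (X ω) : ℝ) ∂μ = (inner ℝ (∫ ω, W ω ∂μ) (∫ ω, X ω ∂μ) : ℝ) := by
  have hcoord : ∀ i : Fin n, IndepFun (fun ω => W ω i) (fun ω => X ω i) μ := fun i =>
    hind.comp (EuclideanSpace.proj (𝕜 := ℝ) i).measurable (EuclideanSpace.proj (𝕜 := ℝ) i).measurable
  have hWi : ∀ i : Fin n, Integrable (fun ω => W ω i) μ := fun i =>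
    (EuclideanSpace.proj (𝕜 := ℝ) i).integrable_comp hW
  have hXi : ∀ i : Fin n, Integrable (fun ω => X ω i) μ := fun i =>
    (EuclideanSpace.proj (𝕜 := ℝ) i).integrable_comp hX
  simp_rw [PiLp.inner_apply, RCLike.inner_apply, conj_trivial]
  rw [integral_finset_sum]
  · refine Finset.sum_congr rfl fun i _ => ?_
    have h1 : ∫ ω, W ω i * X ω i ∂μ = (∫ ω, W ω i ∂μ) * ∫ ω, X ω i ∂μ :=
      (hcoord i).integral_fun_mul_eq_mul_integral (hWi i).aestronglyMeasurable (hXi i).aestronglyMeasurable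
    have h2 : ∫ ω, W ω i ∂μ = (∫ ω, W ω ∂μ) i :=
      (EuclideanSpace.proj (𝕜 := ℝ) i).integral_comp_comm hW
    have h3 : ∫ ω, X ω i ∂μ = (∫ ω, X ω ∂μ) i :=
      (EuclideanSpace.proj (𝕜 := ℝ) i).integral_comp_comm hX
    rw [h2, h3] at h1
    rw [mul_comm ((∫ ω, X ω ∂μ) i), ← h1]
    exact integral_congr_ae (ae_of_all _ fun ω => mul_comm _ _)
  · exact fun i _ => ((hcoord i).integrable_mul (hWi i) (hXi i)).congr (ae_of_all _ fun ω => mul_comm _ _)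

set_option maxHeartbeats 1000000 in
/-- One-step Euler contraction: if `a` is bounded Lipschitz with constant `C`, and
`ΔX` is independent of `(Y,Y')` with `‖𝔼 ΔX‖ ≤ C²h` and `𝔼‖ΔX‖² ≤ C²h`, then
`𝔼‖(Y + a(Y)ΔX) - (Y' + a(Y')ΔX)‖² ≤ (1 + C₁ h) 𝔼‖Y - Y'‖²` for a constant `C₁`
depending only on `C`. -/
theorem stmt4 (C : ℝ) (hC : 0 < C) :
    ∃ C₁ : ℝ, 0 < C₁ ∧
    ∀ (d d' : ℕ) (Ω : Type) [MeasurableSpace Ω] (μ : Measure Ω),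
      IsProbabilityMeasure μ →
    ∀ (Y Y' : Ω → EuclideanSpace ℝ (Fin d)) (ΔX : Ω → EuclideanSpace ℝ (Fin d'))
      (a : EuclideanSpace ℝ (Fin d) → (EuclideanSpace ℝ (Fin d') →L[ℝ] EuclideanSpace ℝ (Fin d)))
      (h : ℝ), 0 < h →
      (∀ y y', ‖a y - a y'‖ ≤ C * ‖y - y'‖) →
      (∀ y, ‖a y‖ ≤ C) →
      Measurable Y → Measurable Y' → Measurable ΔX →
      MemLp Y 2 μ → MemLp Y' 2 μ → MemLp ΔX 2 μ →
      IndepFun (fun ω => (Y ω, Y' ω)) ΔX μ →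
      ‖∫ ω, ΔX ω ∂μ‖ ≤ C ^ 2 * h →
      (∫ ω, ‖ΔX ω‖ ^ 2 ∂μ) ≤ C ^ 2 * h →
      (∫ ω, ‖(Y ω + a (Y ω) (ΔX ω)) - (Y' ω + a (Y' ω) (ΔX ω))‖ ^ 2 ∂μ)
        ≤ (1 + C₁ * h) * ∫ ω, ‖Y ω - Y' ω‖ ^ 2 ∂μ := by
  refine ⟨2 * C ^ 3 + C ^ 4, by positivity, ?_⟩
  intro d d' Ω _ μ hμ Y Y' ΔX a h hh hLip hBdd hYm hY'm hXm hY2 hY'2 hX2 hInd hmean hsq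
  -- abbreviations
  set U : Ω → EuclideanSpace ℝ (Fin d) := fun ω => Y ω - Y' ω with hUdef
  set V : Ω → EuclideanSpace ℝ (Fin d) :=
    fun ω => (a (Y ω) - a (Y' ω)) (ΔX ω) with hVdef
  -- continuity of a
  have ha : Continuous a := by
    refine (LipschitzWith.of_dist_le_mul (K := C.toNNReal) fun y y' => ?_).continuous
    rw [dist_eq_norm, dist_eq_norm]
    exact le_trans (hLip y y') (by
      gcongr
      exact Real.le_coe_toNNReal C)
  -- the adjoint-vector function
  set φ : EuclideanSpace ℝ (Fin d) × EuclideanSpace ℝ (Fin d) → EuclideanSpace ℝ (Fin d') :=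
    fun p => (ContinuousLinearMap.adjoint (a p.1 - a p.2)) (p.1 - p.2) with hφdef
  have hφc : Continuous φ := by
    apply Continuous.clm_apply
    · exact (ContinuousLinearMap.adjoint (𝕜 := ℝ)).continuous.comp
        ((ha.comp continuous_fst).sub (ha.comp continuous_snd))
    · exact continuous_fst.sub continuous_snd
  set W : Ω → EuclideanSpace ℝ (Fin d') := fun ω => φ (Y ω, Y' ω) with hWdef
  have hWm : Measurable W := hφc.measurable.comp (hYm.prodMk hY'm)
  have hWind : IndepFun W ΔX μ := hInd.comp hφc.measurable measurable_id
  -- norm bound on W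
  have hWnorm : ∀ ω, ‖W ω‖ ≤ C * ‖U ω‖ ^ 2 := by
    intro ω
    have h1 : ‖W ω‖ ≤ ‖ContinuousLinearMap.adjoint (a (Y ω) - a (Y' ω))‖ * ‖U ω‖ :=
      ContinuousLinearMap.le_opNorm _ _
    have h2 : ‖ContinuousLinearMap.adjoint (a (Y ω) - a (Y' ω))‖ = ‖a (Y ω) - a (Y' ω)‖ :=
      LinearIsometryEquiv.norm_map _ _
    have h3 : ‖a (Y ω) - a (Y' ω)‖ ≤ C * ‖U ω‖ := hLip _ _
    calc ‖W ω‖ ≤ ‖a (Y ω) - a (Y' ω)‖ * ‖U ω‖ := by rw [← h2]; exact h1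
      _ ≤ (C * ‖U ω‖) * ‖U ω‖ := by
          exact mul_le_mul_of_nonneg_right h3 (norm_nonneg _)
      _ = C * ‖U ω‖ ^ 2 := by ring
  -- integrabilities
  have hU2 : Integrable (fun ω => ‖U ω‖ ^ 2) μ :=
    (memLp_two_iff_integrable_sq_norm ((hYm.sub hY'm).aestronglyMeasurable)).mp (hY2.sub hY'2)
  have hX2' : Integrable (fun ω => ‖ΔX ω‖ ^ 2) μ :=
    (memLp_two_iff_integrable_sq_norm hXm.aestronglyMeasurable).mp hX2
  have hXint : Integrable ΔX μ := hX2.integrable one_le_two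
  have hWint : Integrable W μ := by
    refine Integrable.mono' (hU2.const_mul C) hWm.aestronglyMeasurable ?_
    filter_upwards with ω using hWnorm ω
  -- independence of the squared norms
  have hsqind : IndepFun (fun ω => ‖U ω‖ ^ 2) (fun ω => ‖ΔX ω‖ ^ 2) μ := by
    have hg : Measurable fun p : EuclideanSpace ℝ (Fin d) × EuclideanSpace ℝ (Fin d) =>
        ‖p.1 - p.2‖ ^ 2 := ((continuous_fst.sub continuous_snd).norm.pow 2).measurable
    have hk : Measurable fun x : EuclideanSpace ℝ (Fin d') => ‖x‖ ^ 2 :=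
      (continuous_norm.pow 2).measurable
    exact hInd.comp hg hk
  have hprodint : Integrable (fun ω => ‖U ω‖ ^ 2 * ‖ΔX ω‖ ^ 2) μ :=
    hsqind.integrable_mul hU2 hX2'
  -- V measurable and ‖V‖² dominated
  have hVm : Measurable V := by
    have hc : Continuous fun p : EuclideanSpace ℝ (Fin d) × EuclideanSpace ℝ (Fin d) ×
        EuclideanSpace ℝ (Fin d') => (a p.1 - a p.2.1) p.2.2 := by
      apply Continuous.clm_apply
      · exact (ha.comp continuous_fst).sub (ha.comp (continuous_fst.comp continuous_snd))
      · exact continuous_snd.comp continuous_snd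
    exact hc.measurable.comp (hYm.prodMk (hY'm.prodMk hXm))
  have hVbound : ∀ ω, ‖V ω‖ ^ 2 ≤ C ^ 2 * (‖U ω‖ ^ 2 * ‖ΔX ω‖ ^ 2) := by
    intro ω
    have h1 : ‖V ω‖ ≤ ‖a (Y ω) - a (Y' ω)‖ * ‖ΔX ω‖ := ContinuousLinearMap.le_opNorm _ _
    have h2 : ‖a (Y ω) - a (Y' ω)‖ ≤ C * ‖U ω‖ := hLip _ _
    have h3 : ‖V ω‖ ≤ C * ‖U ω‖ * ‖ΔX ω‖ :=
      h1.trans (mul_le_mul_of_nonneg_right h2 (norm_nonneg _))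
    calc ‖V ω‖ ^ 2 ≤ (C * ‖U ω‖ * ‖ΔX ω‖) ^ 2 := by
          exact pow_le_pow_left₀ (norm_nonneg _) h3 2
      _ = C ^ 2 * (‖U ω‖ ^ 2 * ‖ΔX ω‖ ^ 2) := by ring
  have hV2 : Integrable (fun ω => ‖V ω‖ ^ 2) μ := by
    refine Integrable.mono' (hprodint.const_mul (C ^ 2))
      ((hVm.norm.pow_const 2).aestronglyMeasurable) ?_
    filter_upwards with ω
    rw [Real.norm_eq_abs, abs_of_nonneg (by positivity)]
    exact hVbound ω
  -- inner product term
  have hinner_int : Integrable (fun ω => (inner ℝ (W ω) (ΔX ω) : ℝ)) μ :=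
    aux_inner_integrable hWint hXint hWind
  -- pointwise expansion
  have hpt : ∀ ω, ‖(Y ω + a (Y ω) (ΔX ω)) - (Y' ω + a (Y' ω) (ΔX ω))‖ ^ 2
      = ‖U ω‖ ^ 2 + 2 * (inner ℝ (W ω) (ΔX ω) : ℝ) + ‖V ω‖ ^ 2 := by
    intro ω
    have hZ : (Y ω + a (Y ω) (ΔX ω)) - (Y' ω + a (Y' ω) (ΔX ω)) = U ω + V ω := by
      simp only [hVdef, hUdef, ContinuousLinearMap.sub_apply]
      abel
    have hi : (inner ℝ (W ω) (ΔX ω) : ℝ) = (inner ℝ (U ω) (V ω) : ℝ) := by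
      simp only [hWdef, hφdef, hVdef, hUdef]
      exact ContinuousLinearMap.adjoint_inner_left _ _ _
    rw [hZ, hi, @norm_add_sq_real]
  simp_rw [hpt]
  -- split the integral
  have e1 : ∫ ω, (‖U ω‖ ^ 2 + 2 * (inner ℝ (W ω) (ΔX ω) : ℝ) + ‖V ω‖ ^ 2) ∂μ
      = (∫ ω, (‖U ω‖ ^ 2 + 2 * (inner ℝ (W ω) (ΔX ω) : ℝ)) ∂μ) + ∫ ω, ‖V ω‖ ^ 2 ∂μ :=
    integral_add (hU2.add (hinner_int.const_mul 2)) hV2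
  have e2 : ∫ ω, (‖U ω‖ ^ 2 + 2 * (inner ℝ (W ω) (ΔX ω) : ℝ)) ∂μ
      = (∫ ω, ‖U ω‖ ^ 2 ∂μ) + ∫ ω, 2 * (inner ℝ (W ω) (ΔX ω) : ℝ) ∂μ :=
    integral_add hU2 (hinner_int.const_mul 2)
  have e3 : ∫ ω, 2 * (inner ℝ (W ω) (ΔX ω) : ℝ) ∂μ
      = 2 * ∫ ω, (inner ℝ (W ω) (ΔX ω) : ℝ) ∂μ := integral_const_mul _ _
  rw [e1, e2, e3]
  set I := ∫ ω, ‖U ω‖ ^ 2 ∂μ with hIdef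
  have hInn : ∫ ω, (inner ℝ (W ω) (ΔX ω) : ℝ) ∂μ ≤ C ^ 3 * h * I := by
    rw [aux_inner_indep hWint hXint hWind]
    calc (inner ℝ (∫ ω, W ω ∂μ) (∫ ω, ΔX ω ∂μ) : ℝ)
        ≤ ‖∫ ω, W ω ∂μ‖ * ‖∫ ω, ΔX ω ∂μ‖ := real_inner_le_norm _ _
      _ ≤ (C * I) * (C ^ 2 * h) := by
          refine mul_le_mul ?_ hmean (norm_nonneg _) ?_
          · calc ‖∫ ω, W ω ∂μ‖ ≤ ∫ ω, ‖W ω‖ ∂μ := norm_integral_le_integral_norm _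
              _ ≤ ∫ ω, C * ‖U ω‖ ^ 2 ∂μ := by
                  refine integral_mono hWint.norm (hU2.const_mul C) fun ω => hWnorm ω
              _ = C * I := by rw [integral_const_mul]
          · have hI0 : 0 ≤ I := integral_nonneg fun ω => by positivity
            positivity
      _ = C ^ 3 * h * I := by ring
  have hVbd : ∫ ω, ‖V ω‖ ^ 2 ∂μ ≤ C ^ 4 * h * I := by
    have hI0 : 0 ≤ I := integral_nonneg fun ω => by positivity
    calc ∫ ω, ‖V ω‖ ^ 2 ∂μ ≤ ∫ ω, C ^ 2 * (‖U ω‖ ^ 2 * ‖ΔX ω‖ ^ 2) ∂μ :=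
          integral_mono hV2 (hprodint.const_mul _) fun ω => hVbound ω
      _ = C ^ 2 * (I * ∫ ω, ‖ΔX ω‖ ^ 2 ∂μ) := by
          have e4 : ∫ ω, ‖U ω‖ ^ 2 * ‖ΔX ω‖ ^ 2 ∂μ = I * ∫ ω, ‖ΔX ω‖ ^ 2 ∂μ :=
            hsqind.integral_fun_mul_eq_mul_integral hU2.aestronglyMeasurable hX2'.aestronglyMeasurable
          rw [integral_const_mul, e4]
      _ ≤ C ^ 2 * (I * (C ^ 2 * h)) := by
          have := mul_le_mul_of_nonneg_left hsq hI0
          nlinarith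
      _ = C ^ 4 * h * I := by ring
  have hI0 : 0 ≤ I := integral_nonneg fun ω => by positivity
  nlinarith [hInn, hVbd]
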